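/- Let n, N ∈ ℕ, let (δ_i)_{1≤i≤N} be a Borel partition of ℂⁿ, let E(·) be a spectral measure on ℂⁿ acting on H, and let V ∈ I. Then Σ_{i=1}^{N} |τ_I(E(δ_i)V)| ≤ τ̃_I(|Re(V)| + |Im(V)|), where Re(V) = (V+V*)/2 and Im(V) = (V−V*)/(2i). -/
import Mathlib


open MeasureTheory Complex Real Filter Topology

noncomputable section

variable {H : Type*} [NormedAddCommGroup H] [InnerProductSpace ℂ H] [CompleteSpace H]

/-- A symmetrically normed ideal of `B(H)`, encoded by its carrier set together with a
globally defined norm function whose defining properties are imposed on the carrier. -/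
structure SymmIdeal (H : Type*) [NormedAddCommGroup H] [InnerProductSpace ℂ H]
    [CompleteSpace H] where
  carrier : Set (H →L[ℂ] H)
  nrm : (H →L[ℂ] H) → ℝ
  zero_mem : 0 ∈ carrier
  add_mem : ∀ {A B : H →L[ℂ] H}, A ∈ carrier → B ∈ carrier → A + B ∈ carrier
  smul_mem : ∀ (c : ℂ) {A : H →L[ℂ] H}, A ∈ carrier → c • A ∈ carrier
  mul_left : ∀ (B : H →L[ℂ] H) {A : H →L[ℂ] H}, A ∈ carrier → B * A ∈ carrier
  mul_right : ∀ {A : H →L[ℂ] H} (B : H →L[ℂ] H), A ∈ carrier → A * B ∈ carrier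
  nrm_nonneg : ∀ A, 0 ≤ nrm A
  nrm_eq_zero : ∀ A ∈ carrier, (nrm A = 0 ↔ A = 0)
  nrm_add : ∀ {A B : H →L[ℂ] H}, A ∈ carrier → B ∈ carrier → nrm (A + B) ≤ nrm A + nrm B
  nrm_smul : ∀ (c : ℂ) (A : H →L[ℂ] H), nrm (c • A) = ‖c‖ * nrm A
  dominated : ∀ {A B : H →L[ℂ] H}, A.IsPositive → (B - A).IsPositive → B ∈ carrier →
    A ∈ carrier ∧ nrm A ≤ nrm B
  opnorm_le : ∃ k > 0, ∀ A ∈ carrier, ‖A‖ ≤ k * nrm A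
  symm_nrm : ∀ (B C : H →L[ℂ] H) {A : H →L[ℂ] H}, A ∈ carrier →
    nrm (B * A * C) ≤ ‖B‖ * nrm A * ‖C‖
  complete : ∀ u : ℕ → (H →L[ℂ] H), (∀ m, u m ∈ carrier) →
    (∀ ε > 0, ∃ N, ∀ p ≥ N, ∀ q ≥ N, nrm (u p - u q) < ε) →
    ∃ A ∈ carrier, ∀ ε > 0, ∃ N, ∀ p ≥ N, nrm (u p - A) < ε

/-- A `‖·‖_I`-bounded trace on a symmetrically normed ideal, encoded as a globally defined
linear functional with the trace property and the norm bound imposed on the ideal. -/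
structure IdealTrace {H : Type*} [NormedAddCommGroup H] [InnerProductSpace ℂ H]
    [CompleteSpace H] (J : SymmIdeal H) where
  τ : (H →L[ℂ] H) →ₗ[ℂ] ℂ
  cyclic : ∀ (A B : H →L[ℂ] H), A ∈ J.carrier → τ (A * B) = τ (B * A)
  bound : ℝ
  bound_spec : ∀ A ∈ J.carrier, ‖τ A‖ ≤ bound * J.nrm A

/-- Positivity of a trace on an ideal. -/
def IdealTrace.Positive {H : Type*} [NormedAddCommGroup H] [InnerProductSpace ℂ H]
    [CompleteSpace H] {J : SymmIdeal H} (T : IdealTrace J) : Prop :=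
  ∀ A ∈ J.carrier, A.IsPositive → ∃ r : ℝ, 0 ≤ r ∧ T.τ A = (r : ℂ)

/-- The Hölder property of the root ideal `I^{1/2} = {A : |A|² ∈ I}` with
`‖A‖_{I^{1/2}} = ‖|A|²‖_I^{1/2}` (Assumption 2.8 of the paper):
`‖AB‖_I ≤ ‖A‖_{I^{1/2}} ‖B‖_{I^{1/2}}` for `A, B ∈ I^{1/2}`. -/
def RootHolder {H : Type*} [NormedAddCommGroup H] [InnerProductSpace ℂ H]
    [CompleteSpace H] (J : SymmIdeal H) : Prop :=
  ∀ A B : H →L[ℂ] H,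
    ContinuousLinearMap.adjoint A * A ∈ J.carrier →
    ContinuousLinearMap.adjoint B * B ∈ J.carrier →
    A * B ∈ J.carrier ∧
      J.nrm (A * B) ≤ Real.sqrt (J.nrm (ContinuousLinearMap.adjoint A * A)) *
        Real.sqrt (J.nrm (ContinuousLinearMap.adjoint B * B))

/-- A spectral (projection-valued) measure on a measurable space `X`, acting on `H`. -/
structure IsPVM {X : Type*} [MeasurableSpace X] (E : Set X → (H →L[ℂ] H)) : Prop where
  proj : ∀ s : Set X, MeasurableSet s → IsSelfAdjoint (E s) ∧ E s * E s = E s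
  empty : E ∅ = 0
  univ : E Set.univ = 1
  inter : ∀ s t : Set X, MeasurableSet s → MeasurableSet t → E (s ∩ t) = E s * E t
  cadd : ∀ s : ℕ → Set X, (∀ m, MeasurableSet (s m)) →
    Pairwise (Function.onFun Disjoint s) →
    ∀ x : H, HasSum (fun m => E (s m) x) (E (⋃ m, s m) x)

namespace SPTB

lemma abs_sq_bounds {A P : H →L[ℂ] H} (hA : IsSelfAdjoint A) (hP : P.IsPositive)
    (hsq : P * P = A * A) : 0 ≤ P - A ∧ 0 ≤ P + A := by
  have hP' : (0:H→L[ℂ]H) ≤ P := (ContinuousLinearMap.nonneg_iff_isPositive P).mpr hP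
  have hpos : (0:H→L[ℂ]H) ≤ A⁺ + A⁻ := add_nonneg (CFC.posPart_nonneg A) (CFC.negPart_nonneg A)
  have hAeq : A⁺ - A⁻ = A := CFC.posPart_sub_negPart A hA
  have key : P = A⁺ + A⁻ := by
    have h1 : (A⁺ + A⁻) * (A⁺ + A⁻) = A * A := by
      conv_rhs => rw [← hAeq]
      simp only [mul_add, add_mul, mul_sub, sub_mul, CFC.posPart_mul_negPart,
        CFC.negPart_mul_posPart]
      abel
    calc P = CFC.sqrt (P * P) := (CFC.sqrt_mul_self P hP').symm
    _ = CFC.sqrt ((A⁺+A⁻) * (A⁺+A⁻)) := by rw [hsq, h1]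
    _ = A⁺ + A⁻ := CFC.sqrt_mul_self _ hpos
  constructor
  · have h2 : P - A = A⁻ + A⁻ := by
      rw [key]
      nth_rewrite 3 [← hAeq]
      abel
    rw [h2]; exact add_nonneg (CFC.negPart_nonneg A) (CFC.negPart_nonneg A)
  · have h2 : P + A = A⁺ + A⁺ := by
      rw [key]
      nth_rewrite 3 [← hAeq]
      abel
    rw [h2]; exact add_nonneg (CFC.posPart_nonneg A) (CFC.posPart_nonneg A)

lemma trace_compress {J : SymmIdeal H} (Tk : IdealTrace J) (hTk : Tk.Positive)
    {e A P : H →L[ℂ] H} (he : IsSelfAdjoint e)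
    (hP : P ∈ J.carrier) (h1 : 0 ≤ P - A) (h2 : 0 ≤ P + A) :
    ∃ a p : ℝ, Tk.τ (e * A * e) = (a:ℂ) ∧ Tk.τ (e * P * e) = (p:ℂ) ∧ |a| ≤ p := by
  have hadj : ContinuousLinearMap.adjoint e = e := by
    rw [← ContinuousLinearMap.star_eq_adjoint, he.star_eq]
  have hconj : ∀ X : H →L[ℂ] H, 0 ≤ X → (e * X * e).IsPositive := by
    intro X hX
    have h := ((ContinuousLinearMap.nonneg_iff_isPositive X).mp hX).conj_adjoint e
    rw [hadj] at h
    simpa only [ContinuousLinearMap.mul_def, ContinuousLinearMap.comp_assoc] using h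
  have hplus : (e * (P + A) * e).IsPositive := hconj _ h2
  have hminus : (e * (P - A) * e).IsPositive := hconj _ h1
  have hBmem : e * (P + P) * e ∈ J.carrier :=
    J.mul_right e (J.mul_left e (J.add_mem hP hP))
  have hdiff : (e * (P + P) * e) - (e * (P + A) * e) = e * (P - A) * e := by noncomm_ring
  have hdiff' : (e * (P + P) * e) - (e * (P - A) * e) = e * (P + A) * e := by noncomm_ring
  obtain ⟨hmemp, -⟩ := J.dominated hplus (by rw [hdiff]; exact hminus) hBmem
  obtain ⟨hmemm, -⟩ := J.dominated hminus (by rw [hdiff']; exact hplus) hBmem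
  obtain ⟨rp, hrp, hτp⟩ := hTk _ hmemp hplus
  obtain ⟨rm, hrm, hτm⟩ := hTk _ hmemm hminus
  have hsum : Tk.τ (e * P * e) + Tk.τ (e * A * e) = (rp : ℂ) := by
    rw [← hτp, ← map_add]
    congr 1
    noncomm_ring
  have hsub : Tk.τ (e * P * e) - Tk.τ (e * A * e) = (rm : ℂ) := by
    rw [← hτm, ← map_sub]
    congr 1
    noncomm_ring
  refine ⟨(rp - rm)/2, (rp + rm)/2, ?_, ?_, ?_⟩
  · push_cast
    linear_combination (hsum - hsub) / 2
  · push_cast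
    linear_combination (hsum + hsub) / 2
  · rw [abs_le]
    constructor <;> [linarith; linarith]

lemma per_trace {J : SymmIdeal H} (Tk : IdealTrace J) (hTk : Tk.Positive)
    {e V A B P Q : H →L[ℂ] H} (he : IsSelfAdjoint e) (heId : e * e = e)
    (hVmem : V ∈ J.carrier) (hVAB : V = A + Complex.I • B)
    (hPmem : P ∈ J.carrier) (hQmem : Q ∈ J.carrier)
    (hPA1 : 0 ≤ P - A) (hPA2 : 0 ≤ P + A) (hQB1 : 0 ≤ Q - B) (hQB2 : 0 ≤ Q + B) :
    ∃ c : ℝ, ‖Tk.τ (e * V)‖ ≤ c ∧ Tk.τ (e * (P + Q) * e) = (c : ℂ) := by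
  obtain ⟨a, p, ha, hp, hap⟩ := trace_compress Tk hTk he hPmem hPA1 hPA2
  obtain ⟨b, q, hb, hq, hbq⟩ := trace_compress Tk hTk he hQmem hQB1 hQB2
  have hcyc : Tk.τ (e * V) = Tk.τ (e * V * e) := by
    rw [Tk.cyclic (e * V) e (J.mul_left e hVmem), ← mul_assoc, heId]
  have hsplit : e * V * e = (e * A * e) + Complex.I • (e * B * e) := by
    rw [hVAB]
    simp only [mul_add, add_mul, mul_smul_comm, smul_mul_assoc]
  have hτ : Tk.τ (e * V) = (a : ℂ) + Complex.I * (b : ℂ) := by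
    rw [hcyc, hsplit, map_add, LinearMap.map_smul, ha, hb, smul_eq_mul]
  refine ⟨p + q, ?_, ?_⟩
  · rw [hτ]
    calc ‖(a:ℂ) + Complex.I * b‖ ≤ ‖(a:ℂ)‖ + ‖Complex.I * (b:ℂ)‖ := norm_add_le _ _
    _ = |a| + |b| := by simp
    _ ≤ p + q := add_le_add hap hbq
  · have h : e * (P + Q) * e = (e * P * e) + (e * Q * e) := by noncomm_ring
    rw [h, map_add, hp, hq]
    push_cast
    ring

lemma pvm_finsum {n N : ℕ} (δ : Fin N → Set (Fin n → ℂ))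
    (hmeas : ∀ i, MeasurableSet (δ i)) (hdisj : Pairwise (Function.onFun Disjoint δ))
    (hcover : (⋃ i, δ i) = Set.univ)
    (E : Set (Fin n → ℂ) → (H →L[ℂ] H)) (hE : IsPVM E) :
    ∑ i : Fin N, E (δ i) = 1 := by
  classical
  set s : ℕ → Set (Fin n → ℂ) := fun m => if h : m < N then δ ⟨m, h⟩ else ∅ with hs
  have hsmeas : ∀ m, MeasurableSet (s m) := by
    intro m
    by_cases h : m < N <;> simp [hs, h, hmeas]
  have hsdisj : Pairwise (Function.onFun Disjoint s) := by
    intro m m' hmm'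
    unfold Function.onFun
    by_cases h : m < N <;> by_cases h' : m' < N
    · simp only [hs, dif_pos h, dif_pos h']
      exact hdisj (fun hc => hmm' (congrArg Fin.val hc))
    · simp [hs, dif_neg h']
    · simp [hs, dif_neg h]
    · simp [hs, dif_neg h]
  have hunion : (⋃ m, s m) = Set.univ := by
    rw [← hcover]
    apply Set.Subset.antisymm
    · refine Set.iUnion_subset fun m => ?_
      by_cases h : m < N
      · simp only [hs, dif_pos h]
        exact Set.subset_iUnion δ ⟨m, h⟩
      · simp [hs, dif_neg h]
    · refine Set.iUnion_subset fun i => ?_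
      intro x hx
      refine Set.mem_iUnion.2 ⟨i.1, ?_⟩
      simp only [hs, dif_pos i.isLt, Fin.eta]
      exact hx
  ext x
  have hx := hE.cadd s hsmeas hsdisj x
  rw [hunion, hE.univ, ContinuousLinearMap.one_apply] at hx
  have hzero : ∀ m ∉ Finset.range N, E (s m) x = 0 := by
    intro m hm
    rw [Finset.mem_range] at hm
    simp [hs, dif_neg hm, hE.empty]
  have h2 : HasSum (fun m => E (s m) x) (∑ m ∈ Finset.range N, E (s m) x) :=
    hasSum_sum_of_ne_finset_zero hzero
  have huniq := hx.unique h2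
  have h3 : ∑ i : Fin N, E (δ i) x = ∑ m ∈ Finset.range N, E (s m) x := by
    rw [← Fin.sum_univ_eq_sum_range (fun m => E (s m) x) N]
    refine Finset.sum_congr rfl fun i _ => ?_
    congr 1
    simp [hs, dif_pos i.isLt]
  rw [ContinuousLinearMap.sum_apply, ContinuousLinearMap.one_apply, h3]
  exact huniq.symm

end SPTB


/- STATEMENT 7: if `(δ_i)_{1≤i≤N}` is a Borel partition of `ℂⁿ`, `E` a spectral measure on
`ℂⁿ`, and `V ∈ I`, then `Σ_i |τ_I(E(δ_i)V)| ≤ τ̃_I(|Re V| + |Im V|)`, where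
`τ_I = τ₁ − τ₂ + iτ₃ − iτ₄` is a Jordan decomposition into positive bounded traces and
`τ̃_I = τ₁ + τ₂ + τ₃ + τ₄`.  The absolute values `P = |Re V|`, `Q = |Im V|` are encoded as
the (unique) positive square roots of `(Re V)²`, `(Im V)²`. -/

theorem spectral_partition_trace_bound {n N : ℕ}
    (J : SymmIdeal H) (T T1 T2 T3 T4 : IdealTrace J)
    (hT1 : T1.Positive) (hT2 : T2.Positive) (hT3 : T3.Positive) (hT4 : T4.Positive)
    (hJordan : ∀ A ∈ J.carrier,
      T.τ A = T1.τ A - T2.τ A + Complex.I * T3.τ A - Complex.I * T4.τ A)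
    (δ : Fin N → Set (Fin n → ℂ))
    (hmeas : ∀ i, MeasurableSet (δ i))
    (hdisj : Pairwise (Function.onFun Disjoint δ))
    (hcover : (⋃ i, δ i) = Set.univ)
    (E : Set (Fin n → ℂ) → (H →L[ℂ] H)) (hE : IsPVM E)
    (V : H →L[ℂ] H) (hV : V ∈ J.carrier)
    (P Q : H →L[ℂ] H)
    (hPpos : P.IsPositive) (hPmem : P ∈ J.carrier)
    (hPsq : P * P = (((1 : ℂ)/2) • (V + ContinuousLinearMap.adjoint V)) *
      (((1 : ℂ)/2) • (V + ContinuousLinearMap.adjoint V)))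
    (hQpos : Q.IsPositive) (hQmem : Q ∈ J.carrier)
    (hQsq : Q * Q = ((Complex.I/2) • (ContinuousLinearMap.adjoint V - V)) *
      ((Complex.I/2) • (ContinuousLinearMap.adjoint V - V))) :
    ∑ i : Fin N, ‖T.τ (E (δ i) * V)‖ ≤
      (T1.τ (P + Q) + T2.τ (P + Q) + T3.τ (P + Q) + T4.τ (P + Q)).re := by
  classical
  set A := ((1 : ℂ)/2) • (V + ContinuousLinearMap.adjoint V) with hAdef
  set B := (Complex.I/2) • (ContinuousLinearMap.adjoint V - V) with hBdef
  have hA_sa : IsSelfAdjoint A := by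
    rw [hAdef, IsSelfAdjoint, ← ContinuousLinearMap.star_eq_adjoint, star_smul, star_add,
      star_star]
    rw [show star ((1:ℂ)/2) = (1:ℂ)/2 by norm_num [Complex.ext_iff]]
    rw [add_comm]
  have hB_sa : IsSelfAdjoint B := by
    rw [hBdef, IsSelfAdjoint, ← ContinuousLinearMap.star_eq_adjoint, star_smul, star_sub,
      star_star]
    rw [show star (Complex.I/2) = -(Complex.I/2) by norm_num [Complex.ext_iff]]
    rw [neg_smul, ← smul_neg, neg_sub]
  have hVAB : V = A + Complex.I • B := by
    rw [hAdef, hBdef, smul_smul]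
    rw [show Complex.I * (Complex.I/2) = -((1:ℂ)/2) by
      rw [mul_div_assoc', Complex.I_mul_I]; ring]
    module
  obtain ⟨hPA1, hPA2⟩ := SPTB.abs_sq_bounds hA_sa hPpos hPsq
  obtain ⟨hQB1, hQB2⟩ := SPTB.abs_sq_bounds hB_sa hQpos hQsq
  have heSA : ∀ i, IsSelfAdjoint (E (δ i)) := fun i => (hE.proj _ (hmeas i)).1
  have heId : ∀ i, E (δ i) * E (δ i) = E (δ i) := fun i => (hE.proj _ (hmeas i)).2
  have hsum := SPTB.pvm_finsum δ hmeas hdisj hcover E hE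
  choose c1 hc1 hc1' using fun i =>
    SPTB.per_trace T1 hT1 (heSA i) (heId i) hV hVAB hPmem hQmem hPA1 hPA2 hQB1 hQB2
  choose c2 hc2 hc2' using fun i =>
    SPTB.per_trace T2 hT2 (heSA i) (heId i) hV hVAB hPmem hQmem hPA1 hPA2 hQB1 hQB2
  choose c3 hc3 hc3' using fun i =>
    SPTB.per_trace T3 hT3 (heSA i) (heId i) hV hVAB hPmem hQmem hPA1 hPA2 hQB1 hQB2
  choose c4 hc4 hc4' using fun i =>
    SPTB.per_trace T4 hT4 (heSA i) (heId i) hV hVAB hPmem hQmem hPA1 hPA2 hQB1 hQB2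
  have key : ∀ (Tk : IdealTrace J) (c : Fin N → ℝ),
      (∀ i, Tk.τ (E (δ i) * (P + Q) * E (δ i)) = (c i : ℂ)) →
      (Tk.τ (P + Q)).re = ∑ i, c i := by
    intro Tk c hc
    have hPQ : P + Q ∈ J.carrier := J.add_mem hPmem hQmem
    have h1 : ∀ i, Tk.τ (E (δ i) * (P + Q) * E (δ i)) = Tk.τ (E (δ i) * (P + Q)) := fun i => by
      rw [Tk.cyclic (E (δ i) * (P + Q)) (E (δ i)) (J.mul_left _ hPQ), ← mul_assoc, heId i]
    have h2 : Tk.τ (P + Q) = ((∑ i, c i : ℝ) : ℂ) := by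
      push_cast
      calc Tk.τ (P + Q) = Tk.τ (∑ i, E (δ i) * (P + Q)) := by
            rw [← Finset.sum_mul, hsum, one_mul]
      _ = ∑ i, Tk.τ (E (δ i) * (P + Q)) := map_sum Tk.τ _ _
      _ = ∑ i, (c i : ℂ) := Finset.sum_congr rfl fun i _ => by rw [← h1 i, hc i]
    rw [h2, Complex.ofReal_re]
  have hre1 := key T1 c1 hc1'
  have hre2 := key T2 c2 hc2'
  have hre3 := key T3 c3 hc3'
  have hre4 := key T4 c4 hc4'
  have h4 : ∀ z1 z2 z3 z4 : ℂ,
      ‖z1 - z2 + Complex.I*z3 - Complex.I*z4‖ ≤ ‖z1‖ + ‖z2‖ + ‖z3‖ + ‖z4‖ := by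
    intro z1 z2 z3 z4
    have t1 := norm_sub_le (z1 - z2 + Complex.I*z3) (Complex.I*z4)
    have t2 := norm_add_le (z1 - z2) (Complex.I*z3)
    have t3 := norm_sub_le z1 z2
    simp only [norm_mul, Complex.norm_I, one_mul] at t1 t2
    linarith
  have hTi : ∀ i, ‖T.τ (E (δ i) * V)‖ ≤ c1 i + c2 i + c3 i + c4 i := by
    intro i
    rw [hJordan _ (J.mul_left _ hV)]
    exact le_trans (h4 _ _ _ _)
      (add_le_add (add_le_add (add_le_add (hc1 i) (hc2 i)) (hc3 i)) (hc4 i))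
  calc ∑ i : Fin N, ‖T.τ (E (δ i) * V)‖ ≤ ∑ i : Fin N, (c1 i + c2 i + c3 i + c4 i) :=
        Finset.sum_le_sum fun i _ => hTi i
  _ = (∑ i, c1 i) + (∑ i, c2 i) + (∑ i, c3 i) + (∑ i, c4 i) := by
        simp [Finset.sum_add_distrib]
  _ = (T1.τ (P + Q) + T2.τ (P + Q) + T3.τ (P + Q) + T4.τ (P + Q)).re := by
        rw [Complex.add_re, Complex.add_re, Complex.add_re, hre1, hre2, hre3, hre4]

end
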